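/- The set S = {(x₁,x₂) ∈ ℝ² : x₂ - x₁³ ≥ 0, x₁ ≥ 0} equals the projection onto (x₁,x₂) of the set {(x₁,x₂,u) ∈ ℝ³ : [[x₁, u],[u, x₂]] ⪰ 0 and [[1, x₁],[x₁, u]] ⪰ 0}. -/

import Mathlib

lemma psd2 (a b c : ℝ) :
    (!![a, b; b, c] : Matrix (Fin 2) (Fin 2) ℝ).PosSemidef ↔
    0 ≤ a ∧ 0 ≤ c ∧ b ^ 2 ≤ a * c := by
  constructor
  · intro h
    rw [Matrix.posSemidef_iff_dotProduct_mulVec] at h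
    have ha := h.2 ![1, 0]
    have hc := h.2 ![0, 1]
    have h1 := h.2 ![-b, a]
    have h2 := h.2 ![c, -b]
    have h3 := h.2 ![1, -b]
    simp [dotProduct, Matrix.mulVec, Fin.sum_univ_two] at ha hc h1 h2 h3
    refine ⟨ha, hc, ?_⟩
    rcases eq_or_lt_of_le ha with h0 | h0
    · rcases eq_or_lt_of_le hc with hc0 | hc0
      · nlinarith
      · nlinarith
    · nlinarith
  · rintro ⟨ha, hc, hb⟩
    rw [Matrix.posSemidef_iff_dotProduct_mulVec]
    constructor
    · ext i j
      fin_cases i <;> fin_cases j <;> simp [Matrix.conjTranspose_apply]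
    · intro x
      simp [dotProduct, Matrix.mulVec, Fin.sum_univ_two]
      rcases eq_or_lt_of_le ha with h0 | h0
      · have hb0 : b = 0 := by nlinarith [sq_nonneg b]
        subst hb0
        nlinarith [mul_nonneg ha (sq_nonneg (x 0)), mul_nonneg hc (sq_nonneg (x 1))]
      · nlinarith [sq_nonneg (a * x 0 + b * x 1), mul_nonneg (mul_nonneg ha hc) (sq_nonneg (x 1)),
          mul_nonneg (le_of_lt h0) (mul_nonneg hc (sq_nonneg (x 1))),
          mul_le_mul_of_nonneg_right hb (sq_nonneg (x 1))]

/-- The convex set `{x₂ - x₁³ ≥ 0, x₁ ≥ 0}` equals the projection of the lifted LMI set. -/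
theorem sdp_representation_x2_ge_x1_cubed :
    {p : ℝ × ℝ | p.2 - p.1^3 ≥ 0 ∧ p.1 ≥ 0}
      = {p : ℝ × ℝ | ∃ u : ℝ,
          (!![p.1, u; u, p.2] : Matrix (Fin 2) (Fin 2) ℝ).PosSemidef ∧
          (!![1, p.1; p.1, u] : Matrix (Fin 2) (Fin 2) ℝ).PosSemidef} := by
  ext ⟨x, y⟩
  simp only [Set.mem_setOf_eq, psd2]
  constructor
  · rintro ⟨h1, h2⟩
    refine ⟨x ^ 2, ⟨h2, ?_, by nlinarith⟩, by norm_num, by positivity, by nlinarith⟩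
    nlinarith [pow_nonneg h2 3]
  · rintro ⟨u, ⟨hx, hy, hu⟩, -, -, hu2⟩
    refine ⟨?_, hx⟩
    rcases eq_or_lt_of_le hx with h0 | h0
    · nlinarith
    · nlinarith [sq_nonneg (u - x ^ 2)]
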